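/- Let B_r be the (r+1)×(r+1) matrix with entries |i_{[0,π]}(n,m)| for 0 ≤ n, m ≤ r, i.e., 1/2 on the diagonal, 0 when |n−m| is nonzero even, and 1/(π|n−m|) when |n−m| is odd. Then for odd r ≥ 5, the operator norm of B_r satisfies ‖B_r‖ > (1 + 1/3 + 1/5 + … + 1/r)/π; consequently sup_r ‖B_r‖ = ∞. -/

import Mathlib

open Real

/-- The entries `|i_{[0,π]}(n,m)|`. -/
noncomputable def absIX (n m : ℕ) : ℝ :=
  if n = m then 1 / 2
  else if Even ((n : ℤ) - m) then 0
  else 1 / (π * |(n : ℝ) - m|)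

/-- The finite principal submatrix `B_r` of `|i_{[0,π]}|` of size `(r+1) × (r+1)`. -/
noncomputable def Br (r : ℕ) : Matrix (Fin (r + 1)) (Fin (r + 1)) ℝ :=
  fun i j => absIX i j

/-- The operator norm of a finite real matrix acting on Euclidean space. -/
noncomputable def matOpNorm {n : ℕ} (B : Matrix (Fin n) (Fin n) ℝ) : ℝ :=
  ‖LinearMap.toContinuousLinearMap (Matrix.toEuclideanLin B)‖

lemma absIX_nonneg (n m : ℕ) : 0 ≤ absIX n m := by
  unfold absIX
  split_ifs with h1 h2
  · norm_num
  · exact le_rfl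
  · positivity

lemma absIX_diag (n : ℕ) : absIX n n = 1/2 := by simp [absIX]

lemma absIX_add (n k : ℕ) (hk : Odd k) : absIX n (n + k) = 1 / (π * k) := by
  have hk0 : 0 < k := hk.pos
  have hodd : ¬ Even ((n : ℤ) - ((n + k : ℕ) : ℤ)) := by
    rw [show ((n:ℤ) - ((n + k : ℕ) : ℤ)) = -(k:ℤ) by push_cast; ring, even_neg,
      Int.not_even_iff_odd]
    exact (Int.odd_coe_nat k).mpr hk
  unfold absIX
  rw [if_neg (by omega), if_neg hodd]
  congr 1
  push_cast
  rw [show ((n:ℝ) - (n + k)) = -k by ring, abs_neg, abs_of_nonneg (by positivity)]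

lemma absIX_sub (n k : ℕ) (hk : Odd k) (hkn : k ≤ n) : absIX n (n - k) = 1 / (π * k) := by
  have hk0 : 0 < k := hk.pos
  unfold absIX
  rw [if_neg (by omega)]
  have hc : ((n - k : ℕ) : ℤ) = (n : ℤ) - k := by omega
  rw [if_neg (by
    rw [hc, show ((n:ℤ) - ((n:ℤ) - k)) = (k:ℤ) by ring, Int.not_even_iff_odd]
    exact_mod_cast hk)]
  congr 1
  have hc' : ((n - k : ℕ) : ℝ) = (n : ℝ) - k := by
    push_cast [hkn]; ring
  rw [hc', show ((n:ℝ) - ((n:ℝ) - k)) = k by ring, abs_of_nonneg (by positivity)]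

lemma row_sum (r N : ℕ) (hr : Odd r) (hN : N ≤ r) :
    1/2 + ∑ j ∈ Finset.range ((r+1)/2), 1 / (π * (2*(j:ℝ)+1))
      ≤ ∑ m ∈ Finset.range (r+1), absIX N m := by
  obtain ⟨t, ht⟩ := hr
  set a := (r - N + 1) / 2 with ha
  set φ : ℕ → ℕ := fun j => if N + (2*j+1) ≤ r then N + (2*j+1) else N - (2*(j-a)+1) with hφ
  -- facts about φ on range ((r+1)/2)
  have key : ∀ j < (r+1)/2, (φ j ≤ r ∧ φ j ≠ N) ∧
      ((N + (2*j+1) ≤ r ∧ φ j = N + (2*j+1)) ∨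
       (a ≤ j ∧ 2*(j-a)+1 ≤ N ∧ φ j = N - (2*(j-a)+1))) := by
    intro j hj
    by_cases h : N + (2*j+1) ≤ r
    · refine ⟨⟨?_, ?_⟩, Or.inl ⟨h, if_pos h⟩⟩ <;> simp only [hφ, if_pos h] <;> omega
    · have h1 : a ≤ j := by omega
      have h2 : 2*(j-a)+1 ≤ N := by omega
      refine ⟨⟨?_, ?_⟩, Or.inr ⟨h1, h2, if_neg h⟩⟩ <;> simp only [hφ, if_neg h] <;> omega
  have hinj : Set.InjOn φ (Finset.range ((r+1)/2)) := by
    intro j1 hj1 j2 hj2 he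
    simp only [Finset.coe_range, Set.mem_Iio] at hj1 hj2
    obtain ⟨⟨_, _⟩, h1⟩ := key j1 hj1
    obtain ⟨⟨_, _⟩, h2⟩ := key j2 hj2
    rcases h1 with ⟨hb1, he1⟩ | ⟨hc1, hd1, he1⟩ <;> rcases h2 with ⟨hb2, he2⟩ | ⟨hc2, hd2, he2⟩ <;>
      rw [he1, he2] at he <;> omega
  have hsub : insert N ((Finset.range ((r+1)/2)).image φ) ⊆ Finset.range (r+1) := by
    intro m hm
    simp only [Finset.mem_insert, Finset.mem_image, Finset.mem_range] at hm ⊢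
    rcases hm with rfl | ⟨j, hj, rfl⟩
    · omega
    · exact Nat.lt_succ_of_le (key j hj).1.1
  have hNni : N ∉ (Finset.range ((r+1)/2)).image φ := by
    simp only [Finset.mem_image, Finset.mem_range]
    rintro ⟨j, hj, hje⟩
    exact (key j hj).1.2 hje
  calc 1/2 + ∑ j ∈ Finset.range ((r+1)/2), 1 / (π * (2*(j:ℝ)+1))
      ≤ 1/2 + ∑ j ∈ Finset.range ((r+1)/2), absIX N (φ j) := by
        gcongr with j hj
        simp only [Finset.mem_range] at hj
        obtain ⟨-, hc⟩ := key j hj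
        rcases hc with ⟨hb, he⟩ | ⟨hc, hd, he⟩
        · rw [he, absIX_add N (2*j+1) ⟨j, by ring⟩]
          push_cast
          exact le_rfl
        · rw [he, absIX_sub N (2*(j-a)+1) ⟨j-a, by ring⟩ hd]
          have h2 : ((2*(j-a)+1 : ℕ) : ℝ) ≤ 2*(j:ℝ)+1 := by
            have := Nat.cast_le (α := ℝ).mpr (show 2*(j-a)+1 ≤ 2*j+1 by omega)
            push_cast [Nat.cast_sub hc] at this ⊢
            linarith
          have h3 : (0:ℝ) < ((2*(j-a)+1 : ℕ) : ℝ) := by positivity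
          exact one_div_le_one_div_of_le (by positivity)
            (mul_le_mul_of_nonneg_left h2 pi_pos.le)
    _ = ∑ m ∈ insert N ((Finset.range ((r+1)/2)).image φ), absIX N m := by
        rw [Finset.sum_insert hNni, Finset.sum_image (fun x hx y hy h => hinj (by simpa using hx) (by simpa using hy) h), absIX_diag]
    _ ≤ ∑ m ∈ Finset.range (r+1), absIX N m :=
        Finset.sum_le_sum_of_subset_of_nonneg hsub (fun m _ _ => absIX_nonneg N m)

lemma norm_lower (r : ℕ) (hr : Odd r) :
    1/2 + (∑ j ∈ Finset.range ((r+1)/2), 1/(2*(j:ℝ)+1))/π ≤ matOpNorm (Br r) := by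
  set T := LinearMap.toContinuousLinearMap (Matrix.toEuclideanLin (Br r)) with hT
  set e : EuclideanSpace ℝ (Fin (r+1)) := (WithLp.equiv 2 _).symm (fun _ => 1) with he
  have hei : ∀ i, e i = 1 := fun i => rfl
  have hTe : ∀ i : Fin (r+1), T e i = ∑ m ∈ Finset.range (r+1), absIX i m := by
    intro i
    show (Matrix.toEuclideanLin (Br r)) e i = _
    rw [Matrix.toEuclideanLin_apply]
    show Matrix.mulVec (Br r) (fun _ => 1) i = _
    simp only [Matrix.mulVec, dotProduct, mul_one, Br]
    exact Fin.sum_univ_eq_sum_range (fun m => absIX i m) (r+1)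
  have hinner : (inner ℝ e (T e) : ℝ) = ∑ i : Fin (r+1), ∑ m ∈ Finset.range (r+1), absIX i m := by
    rw [PiLp.inner_apply]
    congr 1
    ext i
    rw [hTe i]
    simp [hei i, RCLike.inner_apply]
  have hS : ∀ N : ℕ,
      1/2 + (∑ j ∈ Finset.range ((r+1)/2), 1/(2*(j:ℝ)+1))/π
        = 1/2 + ∑ j ∈ Finset.range ((r+1)/2), 1 / (π * (2*(j:ℝ)+1)) := by
    intro N
    rw [Finset.sum_div]
    congr 1
    refine Finset.sum_congr rfl fun j _ => ?_
    rw [div_div, mul_comm]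
  set X : ℝ := 1/2 + (∑ j ∈ Finset.range ((r+1)/2), 1/(2*(j:ℝ)+1))/π with hX
  have h1 : ((r:ℝ)+1) * X ≤ (inner ℝ e (T e) : ℝ) := by
    rw [hinner]
    have : ∀ i : Fin (r+1), X ≤ ∑ m ∈ Finset.range (r+1), absIX i m := by
      intro i
      rw [hS 0]
      exact row_sum r i hr (by omega)
    calc ((r:ℝ)+1) * X = ∑ _i : Fin (r+1), X := by
          rw [Finset.sum_const, Finset.card_univ, Fintype.card_fin, nsmul_eq_mul]
          push_cast; ring
      _ ≤ _ := Finset.sum_le_sum (fun i _ => this i)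
  have hnorme : ‖e‖ = Real.sqrt ((r:ℝ)+1) := by
    rw [EuclideanSpace.norm_eq]
    congr 1
    simp [hei]
  have h2 : (inner ℝ e (T e) : ℝ) ≤ ‖T‖ * ((r:ℝ)+1) := by
    calc (inner ℝ e (T e) : ℝ) ≤ ‖e‖ * ‖T e‖ := real_inner_le_norm e (T e)
      _ ≤ ‖e‖ * (‖T‖ * ‖e‖) := by
          have := T.le_opNorm e
          have h0 : (0:ℝ) ≤ ‖e‖ := norm_nonneg _
          nlinarith [norm_nonneg (T e)]
      _ = ‖T‖ * (‖e‖ * ‖e‖) := by ring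
      _ = ‖T‖ * ((r:ℝ)+1) := by
          rw [hnorme, Real.mul_self_sqrt (by positivity)]
  have hr1 : (0:ℝ) < (r:ℝ)+1 := by positivity
  have : ((r:ℝ)+1) * X ≤ ‖T‖ * ((r:ℝ)+1) := le_trans h1 h2
  have : X ≤ ‖T‖ := by
    rw [mul_comm] at this
    exact le_of_mul_le_mul_right this hr1
  exact this

/-- For odd `r ≥ 5`, `‖B_r‖ > (1 + 1/3 + ⋯ + 1/r)/π`; consequently the norms
`‖B_r‖` are not uniformly bounded. -/
theorem stmt15 :
    (∀ r : ℕ, 5 ≤ r → Odd r →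
      (∑ j ∈ Finset.range ((r + 1) / 2), 1 / (2 * (j : ℝ) + 1)) / π < matOpNorm (Br r)) ∧
    ¬ ∃ C : ℝ, ∀ r : ℕ, matOpNorm (Br r) ≤ C := by
  have main : ∀ r : ℕ, Odd r →
      (∑ j ∈ Finset.range ((r + 1) / 2), 1 / (2 * (j : ℝ) + 1)) / π < matOpNorm (Br r) := by
    intro r hr
    have := norm_lower r hr
    linarith
  refine ⟨fun r _ hr => main r hr, ?_⟩
  rintro ⟨C, hC⟩
  obtain ⟨n, hn⟩ := (tendsto_sum_range_one_div_nat_succ_atTop.eventually_ge_atTop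
    (2*π*(|C|+1))).exists
  set r := 2*n+1 with hrdef
  have hodd : Odd r := ⟨n, by omega⟩
  have hhalf : (r+1)/2 = n+1 := by omega
  have hcomp : 2*π*(|C|+1) ≤ ∑ j ∈ Finset.range n, 2*(1/(2*(j:ℝ)+1)) := by
    refine le_trans hn (Finset.sum_le_sum fun j _ => ?_)
    rw [show (2:ℝ)*(1/(2*(j:ℝ)+1)) = 2/(2*(j:ℝ)+1) by ring,
      div_le_div_iff₀ (by positivity) (by positivity)]
    push_cast; ring_nf; linarith
  rw [← Finset.mul_sum] at hcomp
  have hmono : ∑ j ∈ Finset.range n, 1/(2*(j:ℝ)+1)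
      ≤ ∑ j ∈ Finset.range ((r+1)/2), 1/(2*(j:ℝ)+1) := by
    rw [hhalf]
    exact Finset.sum_le_sum_of_subset_of_nonneg (Finset.range_subset_range.mpr (by omega))
      (fun j _ _ => by positivity)
  have hπ : (0:ℝ) < π := pi_pos
  have hlt : C < (∑ j ∈ Finset.range ((r+1)/2), 1/(2*(j:ℝ)+1))/π := by
    rw [lt_div_iff₀ hπ]
    have h1 : π*(|C|+1) ≤ ∑ j ∈ Finset.range n, 1/(2*(j:ℝ)+1) := by linarith
    have h2 : C ≤ |C| := le_abs_self C
    nlinarith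
  exact absurd (hC r) (not_le.mpr (lt_trans hlt (main r hodd)))
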